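/- For the 'dual-window on 2nd request' policy, the worst-case competitive ratio against the optimal offline policy is minimized by W = T = R, where it equals 3. -/

import Mathlib

/-- One step of the `dual-window on 2nd request` policy with windows `W ≤ T`.
State: `(cached, accumulated cost)`; `g` is the gap since the previous request.
A cached object refreshed within `T` costs `g` of storage; otherwise it was
evicted after `T` time units (storage cost `T`) and the new request is a miss
(cost `R`) with no prior request within `W` (since `W ≤ T < g`), so the object
stays uncached.  A request to an uncached object costs `R` and the object is
inserted iff the previous request occurred within the last `W` time units. -/
noncomputable def dualStep (R W T : ℝ) : Bool × ℝ → ℝ → Bool × ℝ :=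
  fun s g =>
    if s.1 then
      if g ≤ T then (true, s.2 + g)
      else (false, s.2 + T + R)
    else
      (decide (g ≤ W), s.2 + R)

/-- Total cost of the `dual-window on 2nd` policy on the list of inter-request
gaps (the first request is a miss and does not trigger insertion). -/
noncomputable def dualCost (R W T : ℝ) (gaps : List ℝ) : ℝ :=
  let s := gaps.foldl (dualStep R W T) (false, R)
  s.2 + (if s.1 then T else 0)

/-- Optimal offline cost `R + ∑ min (gap, R)`. -/
noncomputable def optCost (R : ℝ) (gaps : List ℝ) : ℝ :=
  R + (gaps.map (fun g => min g R)).sum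

/-- Potential-function invariant for the `W = T = R` policy: `Φ(cached) = 0`,
`Φ(uncached) = R`. -/
lemma dual_inv (R : ℝ) (hR : 0 < R) :
    ∀ gaps : List ℝ, (∀ g ∈ gaps, 0 < g) → ∀ b : Bool, ∀ c : ℝ,
    (gaps.foldl (dualStep R R R) (b, c)).2
      + (if (gaps.foldl (dualStep R R R) (b, c)).1 then 0 else R)
    ≤ c + (if b then 0 else R) + 3 * ((gaps.map (fun g => min g R)).sum) := by
  intro gaps
  induction gaps with
  | nil => intro _ b c; cases b <;> simp
  | cons g gs ih =>
    intro hpos b c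
    have hg : 0 < g := hpos g (by simp)
    have hgs : ∀ x ∈ gs, 0 < x := fun x hx => hpos x (by simp [hx])
    simp only [List.foldl_cons, List.map_cons, List.sum_cons]
    rcases b with _ | _
    · -- uncached
      have step : dualStep R R R (false, c) g = (decide (g ≤ R), c + R) := by
        simp [dualStep]
      simp only [step]
      by_cases hgR : g ≤ R
      · have hmin : min g R = g := min_eq_left hgR
        have := ih hgs true (c + R)
        simp only [decide_eq_true hgR] at *
        simp only [if_true, Bool.false_eq_true, if_false] at this ⊢
        rw [hmin]; linarith
      · have hmin : min g R = R := min_eq_right (le_of_not_ge hgR)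
        have hd : decide (g ≤ R) = false := decide_eq_false hgR
        rw [hd]
        have := ih hgs false (c + R)
        simp only [Bool.false_eq_true, if_false] at this ⊢
        rw [hmin]; linarith
    · -- cached
      by_cases hgR : g ≤ R
      · have step : dualStep R R R (true, c) g = (true, c + g) := by
          simp [dualStep, hgR]
        simp only [step]
        have hmin : min g R = g := min_eq_left hgR
        have := ih hgs true (c + g)
        simp only [if_true, Bool.false_eq_true, if_false] at this ⊢
        rw [hmin]; linarith
      · have step : dualStep R R R (true, c) g = (false, c + R + R) := by
          simp [dualStep, hgR]
        simp only [step]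
        have hmin : min g R = R := min_eq_right (le_of_not_ge hgR)
        have := ih hgs false (c + R + R)
        simp only [if_true, Bool.false_eq_true, if_false] at this ⊢
        rw [hmin]; linarith

/-- The adversarial gap sequence: `n` repetitions of a tiny gap `δ` followed by
a gap `T + δ` just over the eviction window. -/
noncomputable def patGaps (δ T : ℝ) (n : ℕ) : List ℝ :=
  (List.replicate n [δ, T + δ]).flatten

lemma pat_foldl (R W T δ : ℝ) (hδW : δ ≤ W) (hδ : 0 < δ) :
    ∀ n : ℕ, ∀ c : ℝ,
    (patGaps δ T n).foldl (dualStep R W T) (false, c)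
      = (false, c + n * (2 * R + T)) := by
  intro n
  induction n with
  | zero => intro c; simp [patGaps]
  | succ n ih =>
    intro c
    have h1 : dualStep R W T (false, c) δ = (true, c + R) := by
      simp [dualStep, hδW]
    have h2 : dualStep R W T (true, c + R) (T + δ) = (false, c + R + T + R) := by
      have : ¬ (T + δ ≤ T) := by linarith
      simp [dualStep, this]
    have : patGaps δ T (n + 1) = δ :: (T + δ) :: patGaps δ T n := by
      simp [patGaps, List.replicate_succ]
    rw [this]
    simp only [List.foldl_cons, h1, h2, ih]
    have : c + R + T + R + (n:ℝ) * (2 * R + T) = c + ((n:ℝ)+1) * (2 * R + T) := by ring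
    rw [this]; push_cast; ring_nf

lemma pat_sum (f : ℝ → ℝ) (δ T : ℝ) :
    ∀ n : ℕ, ((patGaps δ T n).map f).sum = n * (f δ + f (T + δ)) := by
  intro n
  induction n with
  | zero => simp [patGaps]
  | succ n ih =>
    have : patGaps δ T (n + 1) = δ :: (T + δ) :: patGaps δ T n := by
      simp [patGaps, List.replicate_succ]
    rw [this]
    simp only [List.map_cons, List.sum_cons, ih]
    push_cast; ring

lemma pat_pos (δ T : ℝ) (hδ : 0 < δ) (hT : 0 ≤ T) (n : ℕ) :
    ∀ g ∈ patGaps δ T n, 0 < g := by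
  intro g hg
  simp only [patGaps, List.mem_flatten] at hg
  obtain ⟨l, hl, hgl⟩ := hg
  have := List.eq_of_mem_replicate hl
  subst this
  simp only [List.mem_cons, List.not_mem_nil, or_false] at hgl
  rcases hgl with h | h <;> subst h <;> linarith

/-- The worst-case competitive ratio of the `dual-window on 2nd`
policy against the optimal offline policy is minimized by `W = T = R`, where it
equals `3`: with `W = T = R` the cost is at most `3` times optimal on every
sequence, while for every admissible `(W, T)` the worst-case ratio is at
least `3`. -/
theorem dual_window_2nd_competitive (R : ℝ) (hR : 0 < R) :
    (∀ gaps : List ℝ, (∀ g ∈ gaps, 0 < g) →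
      dualCost R R R gaps ≤ 3 * optCost R gaps) ∧
    (∀ W T : ℝ, 0 < W → W ≤ T → ∀ ε, 0 < ε → ∃ gaps : List ℝ,
      (∀ g ∈ gaps, 0 < g) ∧
      (3 - ε) * optCost R gaps ≤ dualCost R W T gaps) := by
  constructor
  · -- upper bound
    intro gaps hpos
    have h := dual_inv R hR gaps hpos false R
    simp only [Bool.false_eq_true, if_false] at h
    rw [dualCost, optCost]
    set s := gaps.foldl (dualStep R R R) (false, R) with hs
    rcases hb : s.1 with _ | _
    · simp only [hb, Bool.false_eq_true, if_false] at h ⊢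
      linarith
    · simp only [hb, if_true] at h ⊢
      linarith
  · -- lower bound
    intro W T hW hWT ε hε
    by_cases hε2 : 2 ≤ ε
    · refine ⟨[], by simp, ?_⟩
      have h1 : dualCost R W T [] = R := by simp [dualCost]
      have h2 : optCost R [] = R := by simp [optCost]
      rw [h1, h2]
      nlinarith
    · push_neg at hε2
      have hT : 0 < T := lt_of_lt_of_le hW hWT
      set m0 := min T R with hm0def
      have hm0 : 0 < m0 := lt_min hT hR
      have hm0R : m0 ≤ R := min_le_right _ _
      have hm0T : m0 ≤ T := min_le_left _ _
      set δ := min W (ε * m0 / 12) with hδdef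
      have hδ : 0 < δ := lt_min hW (by positivity)
      have hδW : δ ≤ W := min_le_left _ _
      have hδ12 : δ ≤ ε * m0 / 12 := min_le_right _ _
      have hδR : δ ≤ R := by nlinarith
      set η := ε * m0 / 2 with hηdef
      have hη : 0 < η := by positivity
      set n := ⌈(2 * R) / η⌉₊ with hndef
      have hn : 2 * R ≤ (n : ℝ) * η := by
        have := Nat.le_ceil ((2 * R) / η)
        rw [div_le_iff₀ hη] at this
        exact this
      refine ⟨patGaps δ T n, pat_pos δ T hδ hT.le n, ?_⟩
      -- compute the two costs
      have hdual : dualCost R W T (patGaps δ T n) = R + n * (2 * R + T) := by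
        rw [dualCost, pat_foldl R W T δ hδW hδ n R]
        simp
      set M := min (T + δ) R with hMdef
      have hopt : optCost R (patGaps δ T n) = R + n * (δ + M) := by
        rw [optCost, pat_sum (fun g => min g R) δ T n]
        simp only [min_eq_left hδR]
        rfl
      rw [hdual, hopt]
      -- key per-pair inequality
      have hm0M : m0 ≤ M := min_le_min (by linarith) le_rfl
      have hMm0 : M ≤ m0 + δ := by
        have h1 : M ≤ min (T + δ) (R + δ) := min_le_min le_rfl (by linarith)
        have h2 : min (T + δ) (R + δ) = m0 + δ := by
          rw [hm0def, ← min_add_add_right]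
        linarith
      have h3m0 : 3 * m0 ≤ 2 * R + T := by
        rcases le_total T R with h | h
        · rw [hm0def, min_eq_left h]; linarith
        · rw [hm0def, min_eq_right h]; linarith
      have hεM : ε * m0 ≤ ε * M := mul_le_mul_of_nonneg_left hm0M hε.le
      have hεδ : 0 ≤ ε * δ := by positivity
      have key : (3 - ε) * (δ + M) ≤ 2 * R + T - η := by
        have expand : (3 - ε) * (δ + M) = 3 * δ + 3 * M - ε * δ - ε * M := by ring
        rw [expand, hηdef]
        linarith
      have hnn : (0 : ℝ) ≤ (n : ℝ) := Nat.cast_nonneg n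
      have hkeyn : (n : ℝ) * ((3 - ε) * (δ + M)) ≤ (n : ℝ) * (2 * R + T - η) :=
        mul_le_mul_of_nonneg_left key hnn
      have hεR : (3 - ε) * R ≤ 3 * R := by nlinarith
      nlinarith [hkeyn, hn, hεR]
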